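/- Every cubic tree (a tree with at least two vertices in which every internal node has degree 3) has a balanced edge, i.e., an edge e such that each of the two parts A_e, B_e of the induced partition of the leaf set L(T) satisfies |A_e| ≥ |L(T)|/3 and |B_e| ≥ |L(T)|/3. -/

import Mathlib

open SimpleGraph

/-- Sorted list of the tuple set `S^d`: tuples with entries in {1,3} except
the last entry which is in {1,2,3,4}, of length between 1 and `d`,
listed in lexicographic order. -/
def Tl : ℕ → List (List ℕ)
  | 0 => []
  | k+1 => [[1]] ++ (Tl k).map (fun a => 1 :: a) ++ [[2], [3]]
            ++ (Tl k).map (fun a => 3 :: a) ++ [[4]]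

/-- Strict lexicographic order on tuples (a proper prefix is smaller). -/
def lexLt (a b : List ℕ) : Prop := List.Lex (· < ·) a b

def lexLe (a b : List ℕ) : Prop := a = b ∨ lexLt a b

/-- `v` is the successor of `u` in the lexicographic order on `S^d`. -/
def IsSucc (d : ℕ) (u v : List ℕ) : Prop :=
  v ∈ Tl d ∧ lexLt u v ∧ ∀ w ∈ Tl d, lexLt u w → lexLe v w

/-- The interval `[a,b]` in `S^d`. -/
def interval (d : ℕ) (a b : List ℕ) : Set (List ℕ) :=
  {c | c ∈ Tl d ∧ lexLe a c ∧ lexLe c b}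

/-- `[a,b]` is a proper interval: no interior element has length `l(a)` or `l(b)`. -/
def ProperInterval (d : ℕ) (a b : List ℕ) : Prop :=
  a ∈ Tl d ∧ b ∈ Tl d ∧ lexLe a b ∧
  ∀ c ∈ interval d a b, c ≠ a → c ≠ b →
    c.length ≠ a.length ∧ c.length ≠ b.length

/-- The set of left endpoints of flat steps of the interval `[a,b]`. -/
def flatSteps (d : ℕ) (a b : List ℕ) : Set (List ℕ) :=
  {c | c ∈ Tl d ∧ lexLe a c ∧ lexLt c b ∧ ∃ v, IsSucc d c v ∧ v.length = c.length}

/-- Vertices of `G_d`: elements of `S^d`, subdivision vertices, and centers. -/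
inductive Vtx where
  | elt : List ℕ → Vtx
  | sub : ℕ → Fin 2 → Vtx
  | ctr : ℕ → Vtx
deriving DecidableEq

/-- The path `P_d` as a list of vertices: the elements of `S^d` in order,
with two subdivision vertices between consecutive elements of equal length
and one otherwise. -/
def pathList (d : ℕ) : List Vtx :=
  ((List.range (Tl d).length).zip (Tl d)).flatMap (fun p =>
    Vtx.elt p.2 :: (match (Tl d)[p.1 + 1]? with
      | none => []
      | some b =>
        if p.2.length = b.length then [Vtx.sub p.1 0, Vtx.sub p.1 1]
        else [Vtx.sub p.1 0]))

/-- `x` and `y` are consecutive in the list `l`. -/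
def ChainAdj {α : Type} (l : List α) (x y : α) : Prop :=
  ∃ i, (l[i]? = some x ∧ l[i+1]? = some y) ∨
       (l[i]? = some y ∧ l[i+1]? = some x)

/-- Adjacency from a center vertex. -/
def ctrAdj (d : ℕ) : Vtx → Vtx → Prop
  | Vtx.ctr k, Vtx.ctr m => k ≠ m ∧ 1 ≤ k ∧ k ≤ d ∧ 1 ≤ m ∧ m ≤ d
  | Vtx.ctr k, Vtx.elt a => 1 ≤ k ∧ k ≤ d ∧ a ∈ Tl d ∧ a.length = k
  | _, _ => False

/-- The vertex set of `G_d`. -/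
def VSet (d : ℕ) : Finset Vtx :=
  (pathList d).toFinset ∪ (Finset.Icc 1 d).image Vtx.ctr

def GdAdj (d : ℕ) (x y : Vtx) : Prop :=
  x ≠ y ∧ (ChainAdj (pathList d) x y ∨ ctrAdj d x y ∨ ctrAdj d y x)

/-- The graph `G_d`. -/
def Gd (d : ℕ) : SimpleGraph {x // x ∈ VSet d} where
  Adj x y := GdAdj d x.1 y.1
  symm := by
    constructor
    rintro x y ⟨hne, h⟩
    refine ⟨hne.symm, ?_⟩
    rcases h with ⟨i, hi⟩ | h | h
    · exact Or.inl ⟨i, hi.symm⟩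
    · exact Or.inr (Or.inr h)
    · exact Or.inr (Or.inl h)
  loopless := ⟨fun x h => h.1 rfl⟩

/-- A rank decomposition of a graph `G`: a finite cubic tree together with a
bijection from the vertices of `G` to the leaves of the tree. -/
structure RankDecomp {V : Type} [Fintype V] (G : SimpleGraph V) where
  t : Type
  fin : Fintype t
  tree : SimpleGraph t
  conn : tree.Connected
  acyc : tree.IsAcyclic
  two_le : 2 ≤ Nat.card t
  cubic : ∀ v : t, (tree.neighborSet v).ncard = 1 ∨ (tree.neighborSet v).ncard = 3
  leafEquiv : V ≃ {v : t // (tree.neighborSet v).ncard = 1}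

/-- The set of vertices of `G` whose leaf lies on the side of `a` of
the edge `ab` of the decomposition tree. -/
def RankDecomp.side {V : Type} [Fintype V] {G : SimpleGraph V}
    (D : RankDecomp G) (a b : D.t) : Set V :=
  {x | (D.tree.deleteEdges {s(a, b)}).Reachable (D.leafEquiv x).1 a}

/-- The cutrank function of `G`: the GF(2)-rank of the adjacency submatrix
between `X` and its complement. -/
noncomputable def cutRank {V : Type} [Fintype V] (G : SimpleGraph V) (X : Set V) : ℕ :=
  haveI : Fintype ↥X := Fintype.ofFinite _
  haveI : Fintype ↥(Xᶜ) := Fintype.ofFinite _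
  haveI : DecidableRel G.Adj := Classical.decRel _
  Matrix.rank (Matrix.of (fun (x : ↥X) (y : ↥(Xᶜ)) =>
    if G.Adj x.1 y.1 then (1 : ZMod 2) else 0))

/-- The decomposition `D` has width at most `k`. -/
def RankDecomp.WidthLE {V : Type} [Fintype V] {G : SimpleGraph V}
    (D : RankDecomp G) (k : ℕ) : Prop :=
  ∀ a b : D.t, D.tree.Adj a b → cutRank G (D.side a b) ≤ k

/-- The rank-width of `G`. -/
noncomputable def rankwidth {V : Type} [Fintype V] (G : SimpleGraph V) : ℕ :=
  sInf {k | ∃ D : RankDecomp G, D.WidthLE k}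

/-- `l` is an induced path in `G`: its vertices are distinct and two of them
are adjacent in `G` iff they are consecutive on `l`. -/
def IsInducedPathList {V : Type} (G : SimpleGraph V) (l : List V) : Prop :=
  l.Nodup ∧ ∀ x ∈ l, ∀ y ∈ l, (G.Adj x y ↔ ChainAdj l x y)

/-- The diamond: the complete graph on four vertices minus an edge. -/
def diamond : SimpleGraph (Fin 4) := (⊤ : SimpleGraph (Fin 4)).deleteEdges {s(2, 3)}

section BalancedEdge

open SimpleGraph Walk

variable {t : Type} {T : SimpleGraph t}

private lemma bridge_of_acyclic (hacyc : T.IsAcyclic) {a b : t} (hab : T.Adj a b) :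
    ¬ (T.deleteEdges {s(a, b)}).Reachable a b :=
  ((isAcyclic_iff_forall_adj_isBridge.mp hacyc) hab)

private def transferWalk {s s' : Set (Sym2 t)} {u v : t}
    (p : (T.deleteEdges s).Walk u v) (h : ∀ e ∈ p.edges, e ∉ s') :
    (T.deleteEdges s').Walk u v :=
  p.transfer _ (fun e he => by
    rw [edgeSet_deleteEdges]
    exact ⟨((T.edgeSet_deleteEdges s) ▸ p.edges_subset_edgeSet he).1, h e he⟩)

private lemma not_mem_takeUntil_support [DecidableEq t] {G : SimpleGraph t} {u v w : t} {p : G.Walk u v}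
    (hp : p.IsPath) (hw : w ∈ p.support) (hne : w ≠ v) : v ∉ (p.takeUntil w hw).support := by
  classical
  intro hv
  have hspec := p.take_spec hw
  have hnodup : p.support.Nodup := hp.support_nodup
  rw [← hspec, Walk.support_append] at hnodup
  have hdisj := (List.nodup_append'.mp hnodup).2.2
  refine hdisj hv ?_
  have h2 : v ∈ (p.dropUntil w hw).support := Walk.end_mem_support _
  rw [Walk.support_eq_cons (p.dropUntil w hw), List.mem_cons] at h2
  rcases h2 with h2 | h2
  · exact absurd h2.symm hne
  · exact h2

/-- Cover: after deleting edge ab, every vertex reaches a or b. -/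
private lemma cover (hconn : T.Connected) {a b : t} (hab : T.Adj a b) (v : t) :
    (T.deleteEdges {s(a, b)}).Reachable v a ∨ (T.deleteEdges {s(a, b)}).Reachable v b := by
  classical
  obtain ⟨w⟩ := hconn.preconnected v a
  set p : T.Walk v a := w.toPath.1 with hp
  have hpath : p.IsPath := w.toPath.2
  by_cases hb : b ∈ p.support
  · right
    refine ⟨(p.takeUntil b hb).toDeleteEdges _ ?_⟩
    intro e he
    rintro rfl
    have ha : a ∈ (p.takeUntil b hb).support :=
      Walk.fst_mem_support_of_mem_edges _ he
    exact not_mem_takeUntil_support hpath hb hab.ne' ha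
  · left
    refine ⟨p.toDeleteEdges _ ?_⟩
    intro e he
    rintro rfl
    exact hb (Walk.snd_mem_support_of_mem_edges _ he)

private lemma disjoint_sides (hacyc : T.IsAcyclic) {a b : t} (hab : T.Adj a b) (v : t) :
    ¬ ((T.deleteEdges {s(a, b)}).Reachable v a ∧ (T.deleteEdges {s(a, b)}).Reachable v b) := by
  rintro ⟨h1, h2⟩
  exact bridge_of_acyclic hacyc hab (h1.symm.trans h2)

/-- If c is a neighbor of b distinct from a, reaching c avoiding cb implies
reaching b avoiding ab. -/
private lemma side_step (hacyc : T.IsAcyclic) {a b c v : t}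
    (hab : T.Adj a b) (hcb : T.Adj c b) (hca : c ≠ a)
    (h : (T.deleteEdges {s(c, b)}).Reachable v c) :
    (T.deleteEdges {s(a, b)}).Reachable v b := by
  classical
  obtain ⟨q⟩ := h
  have hq : ∀ e ∈ q.edges, e ∉ ({s(a, b)} : Set (Sym2 t)) := by
    intro e he
    rintro rfl
    have hb : b ∈ q.support := Walk.snd_mem_support_of_mem_edges _ he
    exact bridge_of_acyclic hacyc hcb (Reachable.symm ⟨q.dropUntil b hb⟩)
  have h1 : (T.deleteEdges {s(a, b)}).Reachable v c := ⟨transferWalk q hq⟩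
  have h2 : (T.deleteEdges {s(a, b)}).Adj c b := by
    rw [deleteEdges_adj]
    exact ⟨hcb, by simp [Sym2.eq_iff, hca, hcb.ne]⟩
  exact h1.trans h2.reachable

/-- Decomposing the b-side: each vertex ≠ b on the b-side of ab lies on the
side of some neighbor c ≠ a of b. -/
private lemma side_decomp (hacyc : T.IsAcyclic) {a b v : t}
    (hab : T.Adj a b) (h : (T.deleteEdges {s(a, b)}).Reachable v b) (hvb : v ≠ b) :
    ∃ c, T.Adj c b ∧ c ≠ a ∧ (T.deleteEdges {s(c, b)}).Reachable v c := by
  classical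
  obtain ⟨w⟩ := h
  set p : (T.deleteEdges {s(a, b)}).Walk v b := w.toPath.1 with hpdef
  have hpath : p.IsPath := w.toPath.2
  have hr : p.reverse.IsPath := hpath.reverse
  obtain ⟨c, hadj, q, hq⟩ := Walk.exists_eq_cons_of_ne (Ne.symm hvb) p.reverse
  rw [hq, Walk.cons_isPath_iff] at hr
  obtain ⟨hqpath, hbq⟩ := hr
  have hT : T.Adj c b := ((deleteEdges_adj).mp hadj).1.symm
  have hne2 : s(b, c) ∉ ({s(a, b)} : Set (Sym2 t)) := ((deleteEdges_adj).mp hadj).2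
  have hca : c ≠ a := by
    rintro rfl
    exact hne2 (Set.mem_singleton_iff.mpr Sym2.eq_swap)
  refine ⟨c, hT, hca, ⟨transferWalk q.reverse ?_⟩⟩
  intro e he
  rw [Walk.edges_reverse, List.mem_reverse] at he
  rintro rfl
  exact hbq (Walk.snd_mem_support_of_mem_edges _ he)

/-- Sides of two distinct neighbors of b are disjoint. -/
private lemma sides_disjoint (hacyc : T.IsAcyclic) {b c d v : t}
    (hcb : T.Adj c b) (hdb : T.Adj d b) (hcd : c ≠ d)
    (h1 : (T.deleteEdges {s(c, b)}).Reachable v c)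
    (h2 : (T.deleteEdges {s(d, b)}).Reachable v d) : False := by
  classical
  obtain ⟨q⟩ := h2
  have hq : ∀ e ∈ q.edges, e ∉ ({s(c, b)} : Set (Sym2 t)) := by
    intro e he
    rintro rfl
    have hb : b ∈ q.support := Walk.snd_mem_support_of_mem_edges _ he
    exact bridge_of_acyclic hacyc hdb (Reachable.symm ⟨q.dropUntil b hb⟩)
  have h2' : (T.deleteEdges {s(c, b)}).Reachable v d := ⟨transferWalk q hq⟩
  have h3 : (T.deleteEdges {s(c, b)}).Adj d b := by
    rw [deleteEdges_adj]
    exact ⟨hdb, by simp [Sym2.eq_iff, hcd.symm, hdb.ne]⟩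
  exact bridge_of_acyclic hacyc hcb ((h1.symm.trans h2').trans h3.reachable)

variable [Fintype t]

private def LS (T : SimpleGraph t) : Set t := {v | (T.neighborSet v).ncard = 1}

private def SS (T : SimpleGraph t) (a b : t) : Set t :=
  {v | (T.deleteEdges {s(a, b)}).Reachable v a}

private lemma SS_swap (T : SimpleGraph t) (a b : t) :
    SS T b a = {v | (T.deleteEdges {s(a, b)}).Reachable v b} := by
  unfold SS
  rw [Sym2.eq_swap]

private noncomputable def cnt (T : SimpleGraph t) (a b : t) : ℕ := (LS T ∩ SS T a b).ncard

private lemma cnt_add (hconn : T.Connected) (hacyc : T.IsAcyclic) {a b : t}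
    (hab : T.Adj a b) : cnt T a b + cnt T b a = (LS T).ncard := by
  classical
  have hU : (LS T ∩ SS T a b) ∪ (LS T ∩ SS T b a) = LS T := by
    apply Set.Subset.antisymm
    · exact Set.union_subset Set.inter_subset_left Set.inter_subset_left
    · intro v hv
      rcases cover hconn hab v with h | h
      · exact Or.inl ⟨hv, h⟩
      · refine Or.inr ⟨hv, ?_⟩
        rw [SS_swap]
        exact h
  have hD : Disjoint (LS T ∩ SS T a b) (LS T ∩ SS T b a) := by
    rw [Set.disjoint_left]
    rintro v ⟨_, h1⟩ ⟨_, h2⟩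
    rw [SS_swap] at h2
    exact disjoint_sides hacyc hab v ⟨h1, h2⟩
  rw [cnt, cnt, ← Set.ncard_union_eq hD (Set.toFinite _) (Set.toFinite _), hU]

private lemma neighbor_extract {b a : t} (h3 : (T.neighborSet b).ncard = 3)
    (ha : T.Adj b a) :
    ∃ c d, c ≠ d ∧ c ≠ a ∧ d ≠ a ∧ T.Adj b c ∧ T.Adj b d ∧
      T.neighborSet b = {a, c, d} := by
  obtain ⟨x, y, z, hxy, hxz, hyz, hset⟩ := Set.ncard_eq_three.mp h3
  have hmem : a ∈ ({x, y, z} : Set t) := hset ▸ ha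
  have hx : x ∈ T.neighborSet b := by rw [hset]; simp
  have hy : y ∈ T.neighborSet b := by rw [hset]; simp
  have hz : z ∈ T.neighborSet b := by rw [hset]; simp
  simp only [Set.mem_insert_iff, Set.mem_singleton_iff] at hmem
  rcases hmem with rfl | rfl | rfl
  · exact ⟨y, z, hyz, fun h => hxy h.symm, fun h => hxz h.symm, hy, hz, hset⟩
  · refine ⟨x, z, hxz, hxy, fun h => hyz h.symm, hx, hz, ?_⟩
    rw [hset]; ext w; simp; tauto
  · refine ⟨x, y, hxy, hxz, hyz, hx, hy, ?_⟩
    rw [hset]; ext w; simp; tauto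

/-- Every side contains a leaf. -/
private lemma one_le_cnt_aux (hconn : T.Connected) (hacyc : T.IsAcyclic)
    (hcubic : ∀ v, (T.neighborSet v).ncard = 1 ∨ (T.neighborSet v).ncard = 3) :
    ∀ (n : ℕ) (a b : t), T.Adj a b → (SS T a b).ncard ≤ n → 1 ≤ cnt T a b := by
  intro n
  induction n with
  | zero =>
    intro a b hab hle
    have : a ∈ SS T a b := Reachable.refl a
    have := (Set.ncard_pos (Set.toFinite _)).mpr ⟨a, this⟩
    omega
  | succ n ih =>
    intro a b hab hle
    rcases hcubic a with h1 | h3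
    · have : a ∈ LS T ∩ SS T a b := ⟨h1, Reachable.refl a⟩
      exact (Set.ncard_pos (Set.toFinite _)).mpr ⟨a, this⟩
    · obtain ⟨c, d, hcd, hcb, hdb, hac, had, hset⟩ := neighbor_extract h3 hab
      have hca : T.Adj c a := hac.symm
      have hsub : SS T c a ⊆ SS T a b := by
        intro v hv
        have h := side_step hacyc hab.symm hca hcb hv
        show (T.deleteEdges {s(a, b)}).Reachable v a
        rwa [Sym2.eq_swap]
      have hamem : a ∈ SS T a b := Reachable.refl a
      have hanmem : a ∉ SS T c a := fun h =>
        bridge_of_acyclic hacyc hca (Reachable.symm h)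
      have hlt : (SS T c a).ncard < (SS T a b).ncard :=
        Set.ncard_lt_ncard ((Set.ssubset_iff_of_subset hsub).mpr
          ⟨a, hamem, hanmem⟩) (Set.toFinite _)
      have hle' : (SS T c a).ncard ≤ n := by omega
      have h1 := ih c a hca hle'
      obtain ⟨v, hv⟩ := (Set.ncard_pos (Set.toFinite _)).mp h1
      exact (Set.ncard_pos (Set.toFinite _)).mpr ⟨v, ⟨hv.1, hsub hv.2⟩⟩

private lemma cnt_pos (hconn : T.Connected) (hacyc : T.IsAcyclic)
    (hcubic : ∀ v, (T.neighborSet v).ncard = 1 ∨ (T.neighborSet v).ncard = 3)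
    {a b : t} (hab : T.Adj a b) : 1 ≤ cnt T a b :=
  one_le_cnt_aux hconn hacyc hcubic (Fintype.card t) a b hab
    (by simpa [Set.ncard_univ] using Set.ncard_le_ncard (Set.subset_univ (SS T a b)) (Set.toFinite _))

private lemma side_of_leaf (hacyc : T.IsAcyclic) {a b : t} (hab : T.Adj a b)
    (hb : (T.neighborSet b).ncard = 1) : SS T b a = {b} := by
  apply Set.Subset.antisymm
  · intro v hv
    by_contra hne
    have hv' : (T.deleteEdges {s(a, b)}).Reachable v b := by
      rw [SS_swap] at hv
      exact hv
    obtain ⟨c, hcb, hca, _⟩ := side_decomp hacyc hab hv' hne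
    obtain ⟨x, hx⟩ := Set.ncard_eq_one.mp hb
    have h1 : a ∈ T.neighborSet b := hab.symm
    have h2 : c ∈ T.neighborSet b := hcb.symm
    rw [hx] at h1 h2
    exact hca (h2.trans h1.symm)
  · intro v hv
    rw [Set.mem_singleton_iff] at hv
    subst hv
    exact Reachable.refl v

private lemma cnt_split (hconn : T.Connected) (hacyc : T.IsAcyclic)
    {a b : t} (hab : T.Adj a b) (hb3 : (T.neighborSet b).ncard = 3) :
    ∃ c d, T.Adj c b ∧ T.Adj d b ∧ c ≠ d ∧ c ≠ a ∧ d ≠ a ∧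
      cnt T b a = cnt T c b + cnt T d b := by
  obtain ⟨c, d, hcd, hca, hda, hbc, hbd, hset⟩ := neighbor_extract hb3 hab.symm
  refine ⟨c, d, hbc.symm, hbd.symm, hcd, hca, hda, ?_⟩
  have hbnotLS : b ∉ LS T := by
    intro h
    have : (T.neighborSet b).ncard = 1 := h
    omega
  have hU : LS T ∩ SS T b a = (LS T ∩ SS T c b) ∪ (LS T ∩ SS T d b) := by
    apply Set.Subset.antisymm
    · rintro v ⟨hvL, hvS⟩
      have hvb : v ≠ b := fun h => hbnotLS (h ▸ hvL)
      have hv' : (T.deleteEdges {s(a, b)}).Reachable v b := by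
        rw [SS_swap] at hvS
        exact hvS
      obtain ⟨c', hc'b, hc'a, hreach⟩ := side_decomp hacyc hab hv' hvb
      have : c' ∈ T.neighborSet b := hc'b.symm
      rw [hset] at this
      simp only [Set.mem_insert_iff, Set.mem_singleton_iff] at this
      rcases this with rfl | rfl | rfl
      · exact absurd rfl hc'a
      · exact Or.inl ⟨hvL, hreach⟩
      · exact Or.inr ⟨hvL, hreach⟩
    · rintro v (⟨hvL, hvS⟩ | ⟨hvL, hvS⟩)
      · refine ⟨hvL, ?_⟩
        rw [SS_swap]
        exact side_step hacyc hab hbc.symm hca hvS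
      · refine ⟨hvL, ?_⟩
        rw [SS_swap]
        exact side_step hacyc hab hbd.symm hda hvS
  have hD : Disjoint (LS T ∩ SS T c b) (LS T ∩ SS T d b) := by
    rw [Set.disjoint_left]
    rintro v ⟨_, h1⟩ ⟨_, h2⟩
    exact sides_disjoint hacyc hbc.symm hbd.symm hcd h1 h2
  rw [cnt, cnt, cnt, hU, Set.ncard_union_eq hD (Set.toFinite _) (Set.toFinite _)]

private lemma core (hconn : T.Connected) (hacyc : T.IsAcyclic)
    (hcubic : ∀ v, (T.neighborSet v).ncard = 1 ∨ (T.neighborSet v).ncard = 3)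
    {a b : t} (hab : T.Adj a b) (hle : cnt T a b ≤ cnt T b a)
    (hmin : ∀ c d : t, T.Adj c d →
      max (cnt T a b) (cnt T b a) ≤ max (cnt T c d) (cnt T d c)) :
    (LS T).ncard ≤ 3 * cnt T a b ∧ (LS T).ncard ≤ 3 * cnt T b a := by
  have hsum := cnt_add hconn hacyc hab
  suffices h : (LS T).ncard ≤ 3 * cnt T a b by
    exact ⟨h, by omega⟩
  by_contra hcon
  push_neg at hcon
  rcases hcubic b with hb1 | hb3
  · -- b is a leaf
    have hSb : SS T b a = {b} := side_of_leaf hacyc hab hb1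
    have hcntba : cnt T b a = 1 := by
      rw [cnt, hSb]
      have hbLS : b ∈ LS T := hb1
      rw [Set.inter_eq_self_of_subset_right (Set.singleton_subset_iff.mpr hbLS)]
      exact Set.ncard_singleton b
    have := cnt_pos hconn hacyc hcubic hab
    omega
  · obtain ⟨c, d, hcb, hdb, hcd, hca, hda, hsplit⟩ := cnt_split hconn hacyc hab hb3
    -- WLOG cnt d b ≤ cnt c b
    rcases le_total (cnt T d b) (cnt T c b) with hdc | hdc
    · have hd1 := cnt_pos hconn hacyc hcubic hdb
      have hsum2 := cnt_add hconn hacyc hcb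
      have hm := hmin c b hcb
      have hm2 : cnt T b a ≤ max (cnt T c b) (cnt T b c) :=
        le_trans (le_max_right _ _) hm
      rcases le_total (cnt T c b) (cnt T b c) with hmm | hmm
      · rw [max_eq_right hmm] at hm2
        omega
      · rw [max_eq_left hmm] at hm2
        omega
    · have hd1 := cnt_pos hconn hacyc hcubic hcb
      have hsum2 := cnt_add hconn hacyc hdb
      have hm := hmin d b hdb
      have hm2 : cnt T b a ≤ max (cnt T d b) (cnt T b d) :=
        le_trans (le_max_right _ _) hm
      rcases le_total (cnt T d b) (cnt T b d) with hmm | hmm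
      · rw [max_eq_right hmm] at hm2
        omega
      · rw [max_eq_left hmm] at hm2
        omega

end BalancedEdge

/-- Every cubic tree has a balanced edge. -/
theorem stmt1 {t : Type} [Fintype t] (T : SimpleGraph t)
    (hconn : T.Connected) (hacyc : T.IsAcyclic) (h2 : 2 ≤ Fintype.card t)
    (hcubic : ∀ v, (T.neighborSet v).ncard = 1 ∨ (T.neighborSet v).ncard = 3) :
    ∃ a b : t, T.Adj a b ∧
      ({v | (T.neighborSet v).ncard = 1} : Set t).ncard ≤
        3 * ({v | (T.neighborSet v).ncard = 1} ∩
             {v | (T.deleteEdges {s(a, b)}).Reachable v a}).ncard ∧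
      ({v | (T.neighborSet v).ncard = 1} : Set t).ncard ≤
        3 * ({v | (T.neighborSet v).ncard = 1} ∩
             {v | (T.deleteEdges {s(a, b)}).Reachable v b}).ncard := by
  classical
  have hEx : ∃ p : t × t, T.Adj p.1 p.2 := by
    obtain ⟨x, y, hxy⟩ := Fintype.exists_pair_of_one_lt_card h2
    obtain ⟨w⟩ := hconn.preconnected x y
    cases w with
    | nil => exact absurd rfl hxy
    | cons h _ => exact ⟨(_, _), h⟩
  have hKne : {k | ∃ p : t × t, T.Adj p.1 p.2 ∧
      max (cnt T p.1 p.2) (cnt T p.2 p.1) = k}.Nonempty := by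
    obtain ⟨p0, hp0⟩ := hEx
    exact ⟨_, p0, hp0, rfl⟩
  obtain ⟨p, hp, hpm⟩ := Nat.sInf_mem hKne
  have hmin : ∀ c d : t, T.Adj c d →
      max (cnt T p.1 p.2) (cnt T p.2 p.1) ≤ max (cnt T c d) (cnt T d c) := by
    intro c d hcd
    rw [hpm]
    exact Nat.sInf_le ⟨(c, d), hcd, rfl⟩
  rcases le_total (cnt T p.1 p.2) (cnt T p.2 p.1) with hle | hle
  · obtain ⟨h1, h2'⟩ := core hconn hacyc hcubic hp hle hmin
    refine ⟨p.1, p.2, hp, ?_, ?_⟩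
    · exact h1
    · rw [← SS_swap T p.1 p.2]
      exact h2'
  · have hmin' : ∀ c d : t, T.Adj c d →
        max (cnt T p.2 p.1) (cnt T p.1 p.2) ≤ max (cnt T c d) (cnt T d c) := by
      intro c d hcd
      rw [max_comm]
      exact hmin c d hcd
    obtain ⟨h1, h2'⟩ := core hconn hacyc hcubic hp.symm hle hmin'
    refine ⟨p.2, p.1, hp.symm, ?_, ?_⟩
    · exact h1
    · rw [← SS_swap T p.2 p.1]
      exact h2'
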